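/- Let f : X → X be a pointwise periodic homeomorphism of a compact metric space. If B ∈ 2^X is a periodic point of the induced map 2^f (f^N(B) = B for some N ≥ 1) and A ∈ 2^X is proximal to B under 2^f, then A = B. In other words, the proximal cell of any periodic point of 2^f is a singleton. -/
import Mathlib


open TopologicalSpace Metric Set Filter

/-- The induced map on the hyperspace of nonempty compact (= closed) subsets. -/
noncomputable def hyper {X : Type*} [MetricSpace X] (f : X ≃ₜ X) :
    NonemptyCompacts X → NonemptyCompacts X :=
  fun A => ⟨⟨f '' A, A.isCompact.image f.continuous⟩, A.nonempty.image f⟩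

/-- `x` is uniformly recurrent for `g`. -/
def IsUnifRec {α : Type*} [MetricSpace α] (g : α → α) (x : α) : Prop :=
  ∀ ε > (0:ℝ), ∃ N > 0, ∀ k : ℕ, dist (g^[k * N] x) x < ε

/-- `x` is recurrent for `g` (it belongs to its own ω-limit set). -/
def IsRec {α : Type*} [MetricSpace α] (g : α → α) (x : α) : Prop :=
  ∀ ε > (0:ℝ), ∀ m : ℕ, ∃ n ≥ m, 0 < n ∧ dist (g^[n] x) x < ε

/-- `x` is almost periodic for `g`. -/
def IsAP {α : Type*} [MetricSpace α] (g : α → α) (x : α) : Prop :=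
  ∀ ε > (0:ℝ), ∃ N : ℕ, ∀ n : ℕ, ∃ i < N, dist (g^[n + i] x) x < ε

/-- `(x, y)` is an asymptotic pair for `g`. -/
def Asymp {α : Type*} [MetricSpace α] (g : α → α) (x y : α) : Prop :=
  Filter.Tendsto (fun n => dist (g^[n] x) (g^[n] y)) Filter.atTop (nhds 0)

/-- `(x, y)` is a proximal pair for `g`. -/
def Proximal {α : Type*} [MetricSpace α] (g : α → α) (x y : α) : Prop :=
  ∀ ε > (0:ℝ), ∀ m : ℕ, ∃ n ≥ m, dist (g^[n] x) (g^[n] y) < ε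

/-- The ω-limit set of `x` under `g`. -/
def omegaSet {α : Type*} [MetricSpace α] (g : α → α) (x : α) : Set α :=
  {y | ∀ ε > (0:ℝ), ∀ m : ℕ, ∃ n ≥ m, dist (g^[n] x) y < ε}

/-- `M` is a minimal set of `g`. -/
def IsMinimalFor {α : Type*} [TopologicalSpace α] (g : α → α) (M : Set α) : Prop :=
  M.Nonempty ∧ IsClosed M ∧ Set.MapsTo g M M ∧
    ∀ M' ⊆ M, M'.Nonempty → IsClosed M' → Set.MapsTo g M' M' → M' = M

/-- `A` is internally chain transitive for `g`. -/
def ICT {α : Type*} [MetricSpace α] (g : α → α) (A : Set α) : Prop :=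
  ∀ a ∈ A, ∀ b ∈ A, ∀ ε > (0:ℝ), ∃ N : ℕ, 1 ≤ N ∧ ∃ c : ℕ → α,
    c 0 = a ∧ c N = b ∧ (∀ i ≤ N, c i ∈ A) ∧ ∀ i < N, dist (g (c i)) (c (i + 1)) < ε

private lemma contIter {X : Type*} [TopologicalSpace X] (f : X ≃ₜ X) (n : ℕ) :
    Continuous ((⇑f)^[n]) := by
  induction n with
  | zero => simpa using continuous_id
  | succ n ih => rw [Function.iterate_succ]; exact ih.comp f.continuous

private lemma entop {X : Type*} [MetricSpace X] [CompactSpace X] {s t : Set X}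
    (hs : s.Nonempty) (ht : t.Nonempty) : EMetric.hausdorffEdist s t ≠ ⊤ :=
  Metric.hausdorffEdist_ne_top_of_nonempty_of_bounded hs ht
    (isCompact_univ.isBounded.subset (Set.subset_univ s))
    (isCompact_univ.isBounded.subset (Set.subset_univ t))

private lemma key_delta {α : Type*} [PseudoMetricSpace α] {g : α → α}
    (hg : UniformContinuous g) :
    ∀ (Q : ℕ) (ε : ℝ), 0 < ε → ∃ δ > 0, ∀ t ≤ Q, ∀ x y : α,
      dist x y < δ → dist (g^[t] x) (g^[t] y) < ε := by
  intro Q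
  induction Q with
  | zero =>
    intro ε hε
    refine ⟨ε, hε, fun t ht x y hxy => ?_⟩
    obtain rfl : t = 0 := Nat.le_zero.mp ht
    simpa using hxy
  | succ Q ih =>
    intro ε hε
    obtain ⟨δ₀, hδ₀, H⟩ := ih ε hε
    obtain ⟨δ₁, hδ₁, H1⟩ := Metric.uniformContinuous_iff.1 hg δ₀ hδ₀
    refine ⟨min δ₁ ε, lt_min hδ₁ hε, fun t ht x y hxy => ?_⟩
    match t with
    | 0 => simpa using lt_of_lt_of_le hxy (min_le_right _ _)
    | (s+1) =>
      rw [Function.iterate_succ_apply, Function.iterate_succ_apply]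
      exact H s (Nat.succ_le_succ_iff.mp ht) _ _ (H1 (lt_of_lt_of_le hxy (min_le_left _ _)))

private lemma hyper_coe {X : Type*} [MetricSpace X] (f : X ≃ₜ X) (C : NonemptyCompacts X) :
    (hyper f C : Set X) = ⇑f '' C := rfl

private lemma hyper_iter_coe {X : Type*} [MetricSpace X] (f : X ≃ₜ X) (n : ℕ)
    (C : NonemptyCompacts X) : ((hyper f)^[n] C : Set X) = (⇑f)^[n] '' C := by
  induction n with
  | zero => simp
  | succ n ih =>
    rw [Function.iterate_succ_apply', hyper_coe, ih, Set.image_image]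
    apply Set.image_congr'
    intro x
    rw [Function.iterate_succ_apply']

private lemma hyper_uc {X : Type*} [MetricSpace X] [CompactSpace X] (f : X ≃ₜ X) :
    UniformContinuous (hyper f) := by
  rw [Metric.uniformContinuous_iff]
  intro ε hε
  obtain ⟨δ, hδ, hδ'⟩ := Metric.uniformContinuous_iff.1
    (CompactSpace.uniformContinuous_of_continuous f.continuous) (ε/2) (by positivity)
  refine ⟨δ, hδ, fun {C D} h => ?_⟩
  rw [NonemptyCompacts.dist_eq] at h ⊢
  have hfin := entop C.nonempty D.nonempty
  have h1 : ∀ x ∈ (C : Set X), ∃ y ∈ (D : Set X), dist x y < δ := fun x hx =>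
    Metric.exists_dist_lt_of_hausdorffDist_lt hx h hfin
  have h2 : ∀ x ∈ (D : Set X), ∃ y ∈ (C : Set X), dist x y < δ := by
    intro x hx
    obtain ⟨y, hy, hxy⟩ := Metric.exists_dist_lt_of_hausdorffDist_lt' hx h hfin
    exact ⟨y, hy, by rwa [dist_comm]⟩
  have hle : Metric.hausdorffDist (hyper f C : Set X) (hyper f D : Set X) ≤ ε/2 := by
    rw [hyper_coe, hyper_coe]
    apply Metric.hausdorffDist_le_of_mem_dist (by positivity)
    · rintro _ ⟨x, hx, rfl⟩
      obtain ⟨y, hy, hxy⟩ := h1 x hx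
      exact ⟨f y, Set.mem_image_of_mem _ hy, (hδ' hxy).le⟩
    · rintro _ ⟨x, hx, rfl⟩
      obtain ⟨y, hy, hxy⟩ := h2 x hx
      exact ⟨f y, Set.mem_image_of_mem _ hy, (hδ' hxy).le⟩
  linarith

theorem stmt14 {X : Type*} [MetricSpace X] [CompactSpace X]
    (f : X ≃ₜ X) (hper : ∀ x : X, ∃ n > 0, (⇑f)^[n] x = x)
    (A B : NonemptyCompacts X) (N : ℕ) (hN : 0 < N)
    (hBper : (hyper f)^[N] B = B) (hprox : Proximal (hyper f) A B) :
    A = B := by 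
  have hBmul : ∀ k : ℕ, (hyper f)^[N * k] B = B := fun k => by
    rw [Function.iterate_mul]; exact Function.iterate_fixed hBper k
  -- Step C: proximal times can be taken to be multiples of Q * N
  have stepC : ∀ Q : ℕ, 0 < Q → ∀ ε > (0:ℝ), ∀ m : ℕ,
      ∃ n ≥ m, (Q * N) ∣ n ∧ dist ((hyper f)^[n] A) B < ε := by
    intro Q hQ ε hε m
    obtain ⟨δ, hδ, H⟩ := key_delta (hyper_uc f) (Q * N) ε hε
    obtain ⟨n₀, hn₀m, hd⟩ := hprox δ hδ m
    set QN := Q * N with hQN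
    have hQN0 : 0 < QN := Nat.mul_pos hQ hN
    set n := QN * (n₀ / QN + 1) with hn
    have hdm : QN * (n₀ / QN) + n₀ % QN = n₀ := Nat.div_add_mod n₀ QN
    have hml : n₀ % QN < QN := Nat.mod_lt _ hQN0
    have h3 : n = QN * (n₀ / QN) + QN := by rw [hn]; ring
    set t := n - n₀ with htdef
    have ht : t ≤ QN := by omega
    have hnt : n = t + n₀ := by omega
    have hdist : dist ((hyper f)^[n] A) ((hyper f)^[n] B) < ε := by
      rw [hnt, Function.iterate_add_apply, Function.iterate_add_apply]
      exact H t ht _ _ hd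
    have hB : (hyper f)^[n] B = B := by
      rw [show n = N * (Q * (n₀ / QN + 1)) by rw [hn, hQN]; ring]
      exact hBmul _
    exact ⟨n, by omega, Dvd.intro _ rfl, by rwa [hB] at hdist⟩
  -- Step D : A ⊆ B
  have hAB : (A : Set X) ⊆ (B : Set X) := by
    intro a ha
    rw [(B.isCompact.isClosed).mem_iff_infDist_zero B.nonempty]
    by_contra hne
    have hpos : 0 < Metric.infDist a (B : Set X) :=
      lt_of_le_of_ne Metric.infDist_nonneg (Ne.symm hne)
    obtain ⟨p, hp, hpa⟩ := hper a
    obtain ⟨n, -, hdvd, hclose⟩ := stepC p hp _ hpos 0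
    obtain ⟨k, hk⟩ : p ∣ n := dvd_trans ⟨N, rfl⟩ hdvd
    have hfa : (⇑f)^[n] a = a := by
      rw [hk, Function.iterate_mul]; exact Function.iterate_fixed hpa k
    have hmem : a ∈ (((hyper f)^[n] A : NonemptyCompacts X) : Set X) := by
      rw [hyper_iter_coe]
      exact ⟨a, ha, hfa⟩
    have hle : Metric.infDist a (B : Set X)
        ≤ Metric.hausdorffDist ((((hyper f)^[n] A : NonemptyCompacts X)) : Set X) (B : Set X) :=
      Metric.infDist_le_hausdorffDist_of_mem hmem
        (entop ((hyper f)^[n] A).nonempty B.nonempty)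
    rw [← NonemptyCompacts.dist_eq] at hle
    exact absurd (lt_of_le_of_lt hle hclose) (lt_irrefl _)
  -- Step E : B ⊆ A, via Baire category on B
  have hBA : (B : Set X) ⊆ (A : Set X) := by
    have hBc : IsCompact (B : Set X) := B.isCompact
    haveI : CompactSpace (B : Set X) := isCompact_iff_compactSpace.mp hBc
    set P : ℕ → Set (B : Set X) := fun q => {x | (⇑f)^[q+1] (x : X) = (x : X)} with hP
    have hPc : ∀ q, IsClosed (P q) := fun q =>
      isClosed_eq ((contIter f (q+1)).comp continuous_subtype_val) continuous_subtype_val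
    have hPu : ⋃ q, P q = Set.univ := by
      ext x
      simp only [Set.mem_iUnion, Set.mem_univ, iff_true]
      obtain ⟨p, hp, hpx⟩ := hper (x : X)
      refine ⟨p - 1, ?_⟩
      show (⇑f)^[(p - 1) + 1] (x : X) = (x : X)
      rw [show p - 1 + 1 = p from Nat.succ_pred_eq_of_pos hp]
      exact hpx
    have hdense : Dense (⋃ q, interior (P q)) := dense_iUnion_interior_of_closed hPc hPu
    set A' : Set (B : Set X) := {x | (x : X) ∈ (A : Set X)} with hA'
    have hA'c : IsClosed A' := A.isCompact.isClosed.preimage continuous_subtype_val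
    have hsub : (⋃ q, interior (P q)) ⊆ A' := by
      intro x hx
      obtain ⟨q, hq⟩ := Set.mem_iUnion.mp hx
      obtain ⟨ε₀, hε₀, hball⟩ := Metric.isOpen_iff.mp isOpen_interior x hq
      have hballP : Metric.ball x ε₀ ⊆ P q := hball.trans interior_subset
      -- show (x : X) ∈ A
      have : (x : X) ∈ closure (A : Set X) := by
        rw [Metric.mem_closure_iff]
        intro ε hε
        have hε' : 0 < min ε ε₀ := lt_min hε hε₀
        obtain ⟨n, -, hdvd, hclose⟩ := stepC (q+1) (Nat.succ_pos q) _ hε' 0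
        rw [NonemptyCompacts.dist_eq] at hclose
        obtain ⟨y, hy, hxy⟩ := Metric.exists_dist_lt_of_hausdorffDist_lt'
          x.2 hclose (entop ((hyper f)^[n] A).nonempty B.nonempty)
        rw [hyper_iter_coe] at hy
        obtain ⟨a, ha, rfl⟩ := hy
        -- f^[n] a ∈ B
        have hNn : N ∣ n := dvd_trans ⟨q + 1, by ring⟩ hdvd
        obtain ⟨k, hk⟩ := hNn
        have hfB : ((⇑f)^[n]) '' (B : Set X) = (B : Set X) := by
          rw [← hyper_iter_coe, hk, hBmul k]
        have hyB : (⇑f)^[n] a ∈ (B : Set X) := by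
          rw [← hfB]; exact Set.mem_image_of_mem _ (hAB ha)
        -- it lies in the ball of radius ε₀ around x, hence in P q
        have hmemball : (⟨(⇑f)^[n] a, hyB⟩ : (B : Set X)) ∈ Metric.ball x ε₀ := by
          rw [Metric.mem_ball, Subtype.dist_eq]
          exact lt_of_lt_of_le hxy inf_le_right
        have hPfix : (⇑f)^[q+1] ((⇑f)^[n] a) = (⇑f)^[n] a := hballP hmemball
        -- hence f^[n] fixes f^[n] a, and by injectivity f^[n] a = a
        obtain ⟨k', hk'⟩ : (q+1) ∣ n := dvd_trans ⟨N, rfl⟩ hdvd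
        have hnfix : ∀ z : X, (⇑f)^[q+1] z = z → (⇑f)^[n] z = z := by
          intro z hz
          rw [hk', Function.iterate_mul]
          exact Function.iterate_fixed hz k'
        have hinj : Function.Injective ((⇑f)^[n]) := Function.Injective.iterate f.injective n
        have haa : (⇑f)^[n] a = a := hinj (hnfix _ hPfix)
        refine ⟨a, ha, ?_⟩
        rw [dist_comm, ← haa]
        exact lt_of_lt_of_le hxy inf_le_left
      rwa [A.isCompact.isClosed.closure_eq] at this
    have hall : ∀ x : (B : Set X), x ∈ A' := by
      intro x
      have : x ∈ closure (⋃ q, interior (P q)) := by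
        rw [hdense.closure_eq]; trivial
      have := closure_mono hsub this
      rwa [hA'c.closure_eq] at this
    intro b hb
    exact hall ⟨b, hb⟩
  exact NonemptyCompacts.ext (subset_antisymm hAB hBA)
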